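/- Define T_r(w) = w * exp(w^2/2) * ∫_w^∞ t^r * exp(-t^2/2) dt. If r > 1, then for all w > r - 1, T_r(w) ≤ 2 * w^r. -/

import Mathlib

open Real MeasureTheory Set

lemma integ_aux {s w : ℝ} (hs : -1 < s) (hw : 0 < w) :
    IntegrableOn (fun t : ℝ => t ^ s * Real.exp (-t ^ 2 / 2)) (Set.Ioi w) := by
  have h := integrableOn_rpow_mul_exp_neg_mul_sq (b := 1/2) (by norm_num) hs
  have he : ∀ t : ℝ, -(1/2 : ℝ) * t ^ 2 = -t ^ 2 / 2 := by intro t; ring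
  simp only [he] at h
  exact h.mono_set (Set.Ioi_subset_Ioi hw.le)

lemma tend_aux (s : ℝ) :
    Filter.Tendsto (fun t : ℝ => t ^ s * Real.exp (-t ^ 2 / 2)) Filter.atTop (nhds 0) := by
  have h := (rpow_mul_exp_neg_mul_sq_isLittleO_exp_neg (b := 1/2) (by norm_num) s)
  have he : ∀ t : ℝ, -(1/2 : ℝ) * t ^ 2 = -t ^ 2 / 2 := by intro t; ring
  simp only [he] at h
  apply h.tendsto_zero_of_tendsto
  have h2 : Filter.Tendsto (fun x : ℝ => -(x/2)) Filter.atTop Filter.atBot :=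
    Filter.tendsto_neg_atTop_atBot.comp (Filter.tendsto_id.atTop_div_const (by norm_num))
  exact (Real.tendsto_exp_atBot.comp h2).congr (fun x => by norm_num; ring_nf)

lemma ftc1 {s w : ℝ} (hw : 0 < w) (hs : 0 < s) :
    ∫ t in Set.Ioi w, (t ^ (s+1) - s * t ^ (s-1)) * Real.exp (-t ^ 2 / 2)
      = w ^ s * Real.exp (-w ^ 2 / 2) := by
  have hderiv : ∀ t ∈ Set.Ici w, HasDerivAt (fun t : ℝ => -(t ^ s * Real.exp (-t ^ 2 / 2)))
      ((t ^ (s+1) - s * t ^ (s-1)) * Real.exp (-t ^ 2 / 2)) t := by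
    intro t ht
    have ht0 : 0 < t := lt_of_lt_of_le hw ht
    have h1 : HasDerivAt (fun t : ℝ => t ^ s) (s * t ^ (s-1)) t :=
      Real.hasDerivAt_rpow_const (Or.inl ht0.ne')
    have h2 : HasDerivAt (fun t : ℝ => -t ^ 2 / 2) (-(2 * t ^ 1) / 2) t :=
      (hasDerivAt_pow 2 t).neg.div_const 2
    have h3 := (Real.hasDerivAt_exp _).comp t h2
    have h4 := (h1.mul h3).neg
    refine h4.congr_deriv ?_
    simp only [Function.comp_apply]
    rw [Real.rpow_add_one ht0.ne']
    ring
  have i1 := integ_aux (s := s+1) (by linarith) hw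
  have i2 := integ_aux (s := s-1) (by linarith) hw
  have hint : IntegrableOn (fun t : ℝ => (t ^ (s+1) - s * t ^ (s-1)) * Real.exp (-t ^ 2 / 2))
      (Set.Ioi w) := by
    have heq : (fun t : ℝ => (t ^ (s+1) - s * t ^ (s-1)) * Real.exp (-t ^ 2 / 2))
        = fun t => t ^ (s+1) * Real.exp (-t ^ 2 / 2)
            - s * (t ^ (s-1) * Real.exp (-t ^ 2 / 2)) := by funext t; ring
    rw [heq]; exact i1.sub (i2.const_mul s)
  have htend : Filter.Tendsto (fun t : ℝ => -(t ^ s * Real.exp (-t ^ 2 / 2)))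
      Filter.atTop (nhds 0) := by simpa using (tend_aux s).neg
  have := MeasureTheory.integral_Ioi_of_hasDerivAt_of_tendsto' hderiv hint htend
  rw [this]; ring

lemma ftc0 {w : ℝ} (hw : 0 < w) :
    ∫ t in Set.Ioi w, t * Real.exp (-t ^ 2 / 2) = Real.exp (-w ^ 2 / 2) := by
  have hderiv : ∀ t ∈ Set.Ici w, HasDerivAt (fun t : ℝ => -Real.exp (-t ^ 2 / 2))
      (t * Real.exp (-t ^ 2 / 2)) t := by
    intro t _
    have h2 : HasDerivAt (fun t : ℝ => -t ^ 2 / 2) (-(2 * t ^ 1) / 2) t :=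
      (hasDerivAt_pow 2 t).neg.div_const 2
    have h3 := ((Real.hasDerivAt_exp _).comp t h2).neg
    refine h3.congr_deriv ?_
    ring
  have hint : IntegrableOn (fun t : ℝ => t * Real.exp (-t ^ 2 / 2)) (Set.Ioi w) := by
    have := integ_aux (s := 1) (by norm_num) hw
    simpa [Real.rpow_one] using this
  have htend : Filter.Tendsto (fun t : ℝ => -Real.exp (-t ^ 2 / 2))
      Filter.atTop (nhds 0) := by
    have := (tend_aux 0).neg
    simp only [Real.rpow_zero, one_mul, neg_zero] at this
    exact this
  have := MeasureTheory.integral_Ioi_of_hasDerivAt_of_tendsto' hderiv hint htend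
  rw [this]; ring

lemma ftcE : ∫ t in Set.Ioi (1:ℝ), Real.exp (9/8 - 3*t/2) = (2/3) * Real.exp (-(3:ℝ)/8) := by
  have hderiv : ∀ t ∈ Set.Ici (1:ℝ), HasDerivAt (fun t : ℝ => -(2/3) * Real.exp (9/8 - 3*t/2))
      (Real.exp (9/8 - 3*t/2)) t := by
    intro t _
    have h2 : HasDerivAt (fun t : ℝ => 9/8 - 3*t/2) (-(3/2) : ℝ) t := by
      have := (((hasDerivAt_id t).const_mul (3:ℝ)).div_const 2).const_sub (9/8 : ℝ)
      refine this.congr_deriv ?_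
      norm_num
    have h3 := ((Real.hasDerivAt_exp _).comp t h2).const_mul (-(2/3) : ℝ)
    refine h3.congr_deriv ?_
    ring
  have hint : IntegrableOn (fun t : ℝ => Real.exp (9/8 - 3*t/2)) (Set.Ioi 1) := by
    have h := (exp_neg_integrableOn_Ioi (1:ℝ) (b := 3/2) (by norm_num)).const_mul (Real.exp (9/8))
    apply MeasureTheory.IntegrableOn.congr_fun h ?_ measurableSet_Ioi
    intro t _
    simp only [← Real.exp_add]
    congr 1; ring
  have htend : Filter.Tendsto (fun t : ℝ => -(2/3) * Real.exp (9/8 - 3*t/2))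
      Filter.atTop (nhds 0) := by
    have h1 : Filter.Tendsto (fun t : ℝ => 3*t/2) Filter.atTop Filter.atTop :=
      (Filter.tendsto_id.const_mul_atTop (by norm_num : (0:ℝ) < 3)).atTop_div_const (by norm_num)
    have h2 : Filter.Tendsto (fun t : ℝ => 9/8 - 3*t/2) Filter.atTop Filter.atBot := by
      have := Filter.tendsto_atBot_add_const_left Filter.atTop (9/8 : ℝ)
        (Filter.tendsto_neg_atTop_atBot.comp h1)
      exact this.congr (fun x => by simp only [Function.comp_apply]; ring)
    simpa using (Real.tendsto_exp_atBot.comp h2).const_mul (-(2/3):ℝ)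
  have := MeasureTheory.integral_Ioi_of_hasDerivAt_of_tendsto' hderiv hint htend
  rw [this]; ring_nf

lemma log_aux {u : ℝ} (hu0 : 0 < u) (hu1 : u ≤ 1) : u - u⁻¹ ≤ 2 * Real.log u := by
  have key : ∀ v : ℝ, 1 ≤ v → 2 * Real.log v ≤ v - v⁻¹ := by
    intro v hv
    have hmono : MonotoneOn (fun v : ℝ => v - v⁻¹ - 2 * Real.log v) (Set.Ici 1) := by
      apply monotoneOn_of_deriv_nonneg (convex_Ici 1)
      · intro x hx
        have hx0 : x ≠ 0 := ne_of_gt (by have : (1:ℝ) ≤ x := hx; linarith)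
        exact (((hasDerivAt_id' (x := x)).sub (hasDerivAt_inv hx0)).sub
          ((Real.hasDerivAt_log hx0).const_mul 2)).continuousAt.continuousWithinAt
      · intro x hx
        rw [interior_Ici] at hx
        have hx0 : x ≠ 0 := ne_of_gt (by have : (1:ℝ) < x := hx; linarith)
        exact (((hasDerivAt_id' (x := x)).sub (hasDerivAt_inv hx0)).sub
          ((Real.hasDerivAt_log hx0).const_mul 2)).differentiableAt.differentiableWithinAt
      · intro x hx
        rw [interior_Ici] at hx
        have hx1 : (1:ℝ) < x := hx
        have hx0 : x ≠ 0 := ne_of_gt (by linarith)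
        have hd := (((hasDerivAt_id' (x := x)).sub (hasDerivAt_inv hx0)).sub
          ((Real.hasDerivAt_log hx0).const_mul 2))
        rw [(show HasDerivAt (fun v : ℝ => v - v⁻¹ - 2 * Real.log v) _ x from hd).deriv]
        have he : (1:ℝ) - (-(x^2)⁻¹) - 2 * x⁻¹ = (x - 1)^2 / x^2 := by
          field_simp; ring
        rw [he]
        positivity
    have h1 := hmono (Set.self_mem_Ici) (show v ∈ Set.Ici 1 from hv) hv
    simp only [Real.log_one, inv_one, sub_self, mul_zero, sub_zero] at h1
    linarith
  have hv : 1 ≤ u⁻¹ := by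
    have h := one_le_inv_iff₀.mpr ⟨hu0, hu1⟩
    exact h
  have := key u⁻¹ hv
  rw [Real.log_inv, inv_inv] at this
  linarith

lemma poly_aux {u : ℝ} (hu0 : 0 < u) (hu1 : u < 1) :
    16 * u^2 ≤ 3 * ((1 - 2*u + 2*u^3) * (11 - 4*u^4)) := by
  nlinarith [mul_nonneg (mul_nonneg (sub_nonneg.2 hu1.le) (sq_nonneg (u - 0.7))) hu0.le,
    mul_nonneg (sub_nonneg.2 hu1.le) (sq_nonneg (u - 0.7)),
    mul_nonneg (sq_nonneg (u - 0.7)) (sq_nonneg u),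
    mul_nonneg (mul_nonneg hu0.le hu0.le) hu0.le,
    sq_nonneg (u - 0.7), sq_nonneg (u-1), sq_nonneg (u^2-u), sq_nonneg (u^3 - u),
    mul_nonneg (sub_nonneg.2 hu1.le) (sq_nonneg (u^2 - 0.5))]

lemma pos_aux {u : ℝ} (hu0 : 0 < u) (hu1 : u < 1) : 0 ≤ 1 - 2*u + 2*u^3 := by
  nlinarith [sq_nonneg (u - 0.577), sq_nonneg u, sq_nonneg (u-1), mul_pos hu0 hu0]

lemma hftc_main {r w : ℝ} (hr : 1 < r) (hw0 : 0 < w) :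
    ∫ t in Set.Ioi w, (t ^ r - (r-1) * t ^ (r-2)) * Real.exp (-t ^ 2 / 2)
      = w ^ (r-1) * Real.exp (-w ^ 2 / 2) := by
  have := ftc1 (s := r-1) hw0 (by linarith)
  simp only [show r - 1 + 1 = r from by ring, show r - 1 - 1 = r - 2 from by ring] at this
  exact this

lemma int_sub_aux {r w : ℝ} (hr : 1 < r) (hw0 : 0 < w) :
    IntegrableOn (fun t : ℝ => (t ^ r - (r-1) * t ^ (r-2)) * Real.exp (-t ^ 2 / 2))
      (Set.Ioi w) := by
  have heq : (fun t : ℝ => (t ^ r - (r-1) * t ^ (r-2)) * Real.exp (-t ^ 2 / 2))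
      = fun t => t ^ r * Real.exp (-t ^ 2 / 2)
          - (r-1) * (t ^ (r-2) * Real.exp (-t ^ 2 / 2)) := by funext t; ring
  rw [heq]
  exact (integ_aux (by linarith) hw0).sub ((integ_aux (by linarith) hw0).const_mul (r-1))

lemma key_easy {r w : ℝ} (hr : 1 < r) (hw : r - 1 < w) (hA : r - 1 ≤ w ^ 2) :
    (∫ t in Set.Ioi w, t ^ r * Real.exp (-t ^ 2 / 2))
      ≤ 2 * (w ^ (r-1) * Real.exp (-w ^ 2 / 2)) := by
  have ha : 0 < r - 1 := by linarith
  have hw0 : 0 < w := lt_trans ha hw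
  rcases le_or_gt (r-1) 2 with h2 | h2
  · -- method 2
    have hpt : ∀ t ∈ Set.Ioi w, t ^ r * Real.exp (-t ^ 2 / 2)
        ≤ (t ^ r - (r-1) * t ^ (r-2)) * Real.exp (-t ^ 2 / 2)
          + w ^ (r-1) * (t * Real.exp (-t ^ 2 / 2)) := by
      intro t ht
      have htw : w < t := ht
      have ht0 : 0 < t := lt_trans hw0 htw
      have hE' : (0:ℝ) < Real.exp (-t ^ 2 / 2) := Real.exp_pos _
      have k1 : t ^ (r-3) ≤ w ^ (r-3) :=
        Real.rpow_le_rpow_of_nonpos hw0 htw.le (by linarith)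
      have k2 : t ^ (r-2) = t ^ (r-3) * t := by
        have h := Real.rpow_add_one ht0.ne' (r-3)
        rw [show r - 3 + 1 = r - 2 from by ring] at h
        exact h
      have k3 : w ^ (r-1) = w ^ (r-3) * w ^ 2 := by
        have h := Real.rpow_add hw0 (r-3) 2
        rw [show r - 3 + 2 = r - 1 from by ring, Real.rpow_two] at h
        exact h
      have k1' : t ^ (r-3) * t ≤ w ^ (r-3) * t := mul_le_mul_of_nonneg_right k1 ht0.le
      have k4 : (r-1) * t ^ (r-2) ≤ w ^ (r-1) * t := by
        rw [k2, k3]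
        have hT : (0:ℝ) ≤ t ^ (r-3) * t := mul_nonneg (Real.rpow_pos_of_pos ht0 _).le ht0.le
        nlinarith [mul_le_mul_of_nonneg_left k1' (sq_nonneg w),
          mul_le_mul_of_nonneg_right hA hT]
      nlinarith [mul_le_mul_of_nonneg_right k4 hE'.le]
    have hint2 : IntegrableOn (fun t : ℝ => (t ^ r - (r-1) * t ^ (r-2)) * Real.exp (-t ^ 2 / 2)
        + w ^ (r-1) * (t * Real.exp (-t ^ 2 / 2))) (Set.Ioi w) := by
      apply (int_sub_aux hr hw0).add
      have := integ_aux (s := 1) (by norm_num) hw0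
      simp only [Real.rpow_one] at this
      exact this.const_mul _
    calc (∫ t in Set.Ioi w, t ^ r * Real.exp (-t ^ 2 / 2))
        ≤ ∫ t in Set.Ioi w, ((t ^ r - (r-1) * t ^ (r-2)) * Real.exp (-t ^ 2 / 2)
            + w ^ (r-1) * (t * Real.exp (-t ^ 2 / 2))) :=
          MeasureTheory.setIntegral_mono_on (integ_aux (by linarith) hw0) hint2
            measurableSet_Ioi hpt
      _ = (∫ t in Set.Ioi w, (t ^ r - (r-1) * t ^ (r-2)) * Real.exp (-t ^ 2 / 2))
            + w ^ (r-1) * ∫ t in Set.Ioi w, t * Real.exp (-t ^ 2 / 2) := by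
          rw [MeasureTheory.integral_add (int_sub_aux hr hw0) ?_, MeasureTheory.integral_const_mul]
          have := integ_aux (s := 1) (by norm_num) hw0
          simp only [Real.rpow_one] at this
          exact this.const_mul _
      _ = 2 * (w ^ (r-1) * Real.exp (-w ^ 2 / 2)) := by
          rw [hftc_main hr hw0, ftc0 hw0]; ring
  · -- method 1
    have h2a : 2 * (r-1) ≤ w ^ 2 := by nlinarith
    have hpt : ∀ t ∈ Set.Ioi w, t ^ r * Real.exp (-t ^ 2 / 2)
        ≤ 2 * ((t ^ r - (r-1) * t ^ (r-2)) * Real.exp (-t ^ 2 / 2)) := by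
      intro t ht
      have htw : w < t := ht
      have ht0 : 0 < t := lt_trans hw0 htw
      have hE' : (0:ℝ) < Real.exp (-t ^ 2 / 2) := Real.exp_pos _
      have k2 : t ^ r = t ^ (r-2) * t ^ 2 := by
        have h := Real.rpow_add ht0 (r-2) 2
        rw [show r - 2 + 2 = r from by ring, Real.rpow_two] at h
        exact h
      have hp : (0:ℝ) < t ^ (r-2) := Real.rpow_pos_of_pos ht0 _
      have k5 : 2 * (r-1) * t ^ (r-2) ≤ t ^ r := by
        rw [k2]
        have : w ^ 2 ≤ t ^ 2 := by nlinarith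
        nlinarith
      nlinarith [mul_le_mul_of_nonneg_right k5 hE'.le]
    calc (∫ t in Set.Ioi w, t ^ r * Real.exp (-t ^ 2 / 2))
        ≤ ∫ t in Set.Ioi w, 2 * ((t ^ r - (r-1) * t ^ (r-2)) * Real.exp (-t ^ 2 / 2)) :=
          MeasureTheory.setIntegral_mono_on (integ_aux (by linarith) hw0)
            ((int_sub_aux hr hw0).const_mul 2) measurableSet_Ioi hpt
      _ = 2 * (w ^ (r-1) * Real.exp (-w ^ 2 / 2)) := by
          rw [MeasureTheory.integral_const_mul, hftc_main hr hw0]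

lemma intE_aux : MeasureTheory.IntegrableOn (fun t : ℝ => Real.exp (9/8 - 3*t/2)) (Set.Ioi 1) := by
  have h := (exp_neg_integrableOn_Ioi (1:ℝ) (b := 3/2) (by norm_num)).const_mul (Real.exp (9/8))
  apply MeasureTheory.IntegrableOn.congr_fun h ?_ measurableSet_Ioi
  intro t _
  simp only [← Real.exp_add]
  congr 1; ring

set_option maxHeartbeats 1000000 in
lemma key_hard {r w : ℝ} (hr : 1 < r) (hw : r - 1 < w) (hC : w ^ 2 < r - 1) :
    (∫ t in Set.Ioi w, t ^ r * Real.exp (-t ^ 2 / 2))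
      ≤ 2 * (w ^ (r-1) * Real.exp (-w ^ 2 / 2)) := by
  have ha : 0 < r - 1 := by linarith
  have hw0 : 0 < w := lt_trans ha hw
  have hw1 : w < 1 := by nlinarith
  have hE : (0:ℝ) < Real.exp (-w ^ 2 / 2) := Real.exp_pos _
  set E := Real.exp (-w ^ 2 / 2) with hEdef
  have hJint : MeasureTheory.IntegrableOn (fun t : ℝ => t ^ (r-2) * Real.exp (-t ^ 2 / 2))
      (Set.Ioi w) := integ_aux (by linarith) hw0
  -- integration by parts identity
  have hIBP : (∫ t in Set.Ioi w, t ^ r * Real.exp (-t ^ 2 / 2))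
      = w ^ (r-1) * E + (r-1) * ∫ t in Set.Ioi w, t ^ (r-2) * Real.exp (-t ^ 2 / 2) := by
    have hsub : (∫ t in Set.Ioi w, (t ^ r - (r-1) * t ^ (r-2)) * Real.exp (-t ^ 2 / 2))
        = (∫ t in Set.Ioi w, t ^ r * Real.exp (-t ^ 2 / 2))
          - (r-1) * ∫ t in Set.Ioi w, t ^ (r-2) * Real.exp (-t ^ 2 / 2) := by
      rw [MeasureTheory.setIntegral_congr_fun measurableSet_Ioi
        (show Set.EqOn _ (fun t : ℝ => t ^ r * Real.exp (-t ^ 2 / 2)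
          - (r-1) * (t ^ (r-2) * Real.exp (-t ^ 2 / 2))) (Set.Ioi w) from fun t _ => by ring),
        MeasureTheory.integral_sub (integ_aux (by linarith) hw0) (hJint.const_mul (r-1)),
        MeasureTheory.integral_const_mul]
    rw [hftc_main hr hw0] at hsub
    linarith
  -- split the remaining integral
  have hsplit : (∫ t in Set.Ioi w, t ^ (r-2) * Real.exp (-t ^ 2 / 2))
      = (∫ t in Set.Ioc w 1, t ^ (r-2) * Real.exp (-t ^ 2 / 2))
        + ∫ t in Set.Ioi 1, t ^ (r-2) * Real.exp (-t ^ 2 / 2) := by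
    rw [← Set.Ioc_union_Ioi_eq_Ioi hw1.le]
    exact MeasureTheory.setIntegral_union (Set.Ioc_disjoint_Ioi le_rfl) measurableSet_Ioi
      (hJint.mono_set Set.Ioc_subset_Ioi_self)
      (hJint.mono_set (Set.Ioi_subset_Ioi hw1.le))
  -- bound the first piece
  have hmono_int : MeasureTheory.IntegrableOn (fun t : ℝ => t ^ (r-2) * E) (Set.Ioc w 1) := by
    have h := intervalIntegral.intervalIntegrable_rpow' (a := w) (b := 1)
      (show (-1:ℝ) < r - 2 from by linarith)
    rw [intervalIntegrable_iff_integrableOn_Ioc_of_le hw1.le] at h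
    exact h.mul_const E
  have hJ1 : (∫ t in Set.Ioc w 1, t ^ (r-2) * Real.exp (-t ^ 2 / 2))
      ≤ (1 - w ^ (r-1)) / (r-1) * E := by
    have step1 : (∫ t in Set.Ioc w 1, t ^ (r-2) * Real.exp (-t ^ 2 / 2))
        ≤ ∫ t in Set.Ioc w 1, t ^ (r-2) * E := by
      apply MeasureTheory.setIntegral_mono_on (hJint.mono_set Set.Ioc_subset_Ioi_self)
        hmono_int measurableSet_Ioc
      intro t ht
      have htw : w < t := ht.1
      have ht0 : 0 < t := lt_trans hw0 htw
      have he : Real.exp (-t ^ 2 / 2) ≤ E := by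
        rw [hEdef]
        apply Real.exp_le_exp.mpr
        nlinarith
      exact mul_le_mul_of_nonneg_left he (Real.rpow_nonneg ht0.le _)
    have step2 : (∫ t in Set.Ioc w 1, t ^ (r-2) * E) = (1 - w ^ (r-1)) / (r-1) * E := by
      rw [MeasureTheory.integral_mul_const]
      congr 1
      rw [← intervalIntegral.integral_of_le hw1.le,
        integral_rpow (Or.inl (show (-1:ℝ) < r - 2 from by linarith))]
      rw [show r - 2 + 1 = r - 1 from by ring, Real.one_rpow]
    linarith
  -- bound the second piece
  have hJ2 : (∫ t in Set.Ioi 1, t ^ (r-2) * Real.exp (-t ^ 2 / 2))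
      ≤ (2/3) * Real.exp (-(3:ℝ)/8) := by
    rw [← ftcE]
    apply MeasureTheory.setIntegral_mono_on (hJint.mono_set (Set.Ioi_subset_Ioi hw1.le))
      intE_aux measurableSet_Ioi
    intro t ht
    have ht1 : (1:ℝ) < t := ht
    have e1 : t ^ (r-2) ≤ 1 := Real.rpow_le_one_of_one_le_of_nonpos ht1.le (by nlinarith)
    have e2 : Real.exp (-t ^ 2 / 2) ≤ Real.exp (9/8 - 3*t/2) := by
      apply Real.exp_le_exp.mpr
      nlinarith [sq_nonneg (2*t - 3)]
    calc t ^ (r-2) * Real.exp (-t ^ 2 / 2) ≤ 1 * Real.exp (9/8 - 3*t/2) :=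
          mul_le_mul e1 e2 (Real.exp_pos _).le zero_le_one
      _ = Real.exp (9/8 - 3*t/2) := one_mul _
  -- combine
  have hcomb : (∫ t in Set.Ioi w, t ^ r * Real.exp (-t ^ 2 / 2))
      ≤ E + (2*(r-1)/3) * Real.exp (-(3:ℝ)/8) := by
    rw [hIBP, hsplit]
    have c1 : (r-1) * ((1 - w ^ (r-1)) / (r-1) * E) = (1 - w ^ (r-1)) * E := by
      field_simp
    nlinarith [mul_le_mul_of_nonneg_left hJ1 ha.le, mul_le_mul_of_nonneg_left hJ2 ha.le]
  -- final numeric estimate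
  set u := Real.sqrt w with hudef
  have hu0 : 0 < u := Real.sqrt_pos.mpr hw0
  have hu1 : u < 1 := by
    rw [hudef, show (1:ℝ) = Real.sqrt 1 from (Real.sqrt_one).symm]
    exact Real.sqrt_lt_sqrt hw0.le hw1
  have hu2 : u ^ 2 = w := Real.sq_sqrt hw0.le
  -- w^(r-1) ≥ w^w ≥ 1 + u^3 - u
  have m1 : w ^ w ≤ w ^ (r-1) := Real.rpow_le_rpow_of_exponent_ge hw0 hw1.le hw.le
  have m2 : Real.log w = 2 * Real.log u := by
    rw [← hu2, Real.log_pow]; push_cast; ring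
  have m3 : u - u⁻¹ ≤ Real.log w := by
    rw [m2]; exact log_aux hu0 hu1.le
  have m4 : u ^ 3 - u ≤ w * Real.log w := by
    have h := mul_le_mul_of_nonneg_left m3 hw0.le
    have : w * (u - u⁻¹) = u ^ 3 - u := by
      rw [← hu2]; field_simp
    linarith
  have m5 : 1 + (u ^ 3 - u) ≤ w ^ w := by
    have h := Real.add_one_le_exp (w * Real.log w)
    rw [Real.rpow_def_of_pos hw0]
    have : Real.log w * w = w * Real.log w := by ring
    rw [this]
    linarith
  -- exp bound
  have m7 : (11 - 4*w ^ 2)/8 ≤ Real.exp (3/8 - w ^ 2/2) := by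
    have h := Real.add_one_le_exp (3/8 - w ^ 2/2)
    linarith
  have m8 : (0:ℝ) ≤ 1 - 2*u + 2*u ^ 3 := pos_aux hu0 hu1
  have m9 : 16 * u ^ 2 ≤ 3 * ((1 - 2*u + 2*u ^ 3) * (11 - 4*u ^ 4)) := poly_aux hu0 hu1
  have hexpE : Real.exp (-(3:ℝ)/8) * Real.exp (3/8 - w ^ 2/2) = E := by
    rw [hEdef, ← Real.exp_add]
    congr 1; ring
  -- (2(r-1)/3) * exp(-3/8) ≤ (1 - 2u + 2u^3) * E
  have m10 : (2*(r-1)/3) * Real.exp (-(3:ℝ)/8) ≤ (1 - 2*u + 2*u ^ 3) * E := by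
    have hra : r - 1 ≤ w := hw.le
    have hw4 : w ^ 2 = u ^ 4 := by rw [← hu2]; ring
    have e38 : (0:ℝ) < Real.exp (-(3:ℝ)/8) := Real.exp_pos _
    have step : (2*(r-1)/3) ≤ (1 - 2*u + 2*u ^ 3) * Real.exp (3/8 - w ^ 2/2) := by
      have s1 : (2*(r-1)/3) ≤ 2*u ^ 2/3 := by rw [hu2]; linarith
      have s2 : 2*u ^ 2/3 ≤ (1 - 2*u + 2*u ^ 3) * ((11 - 4*w ^ 2)/8) := by
        rw [hw4]; nlinarith
      have s3 : (1 - 2*u + 2*u ^ 3) * ((11 - 4*w ^ 2)/8)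
          ≤ (1 - 2*u + 2*u ^ 3) * Real.exp (3/8 - w ^ 2/2) :=
        mul_le_mul_of_nonneg_left m7 m8
      linarith
    calc (2*(r-1)/3) * Real.exp (-(3:ℝ)/8)
        ≤ ((1 - 2*u + 2*u ^ 3) * Real.exp (3/8 - w ^ 2/2)) * Real.exp (-(3:ℝ)/8) :=
          mul_le_mul_of_nonneg_right step e38.le
      _ = (1 - 2*u + 2*u ^ 3) * E := by rw [← hexpE]; ring
  -- finish
  have m11 : (1 + (u ^ 3 - u)) * E ≤ w ^ (r-1) * E :=
    mul_le_mul_of_nonneg_right (le_trans m5 m1) hE.le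
  nlinarith [hcomb, m10, m11]

theorem stmt_6 (r : ℝ) (hr : 1 < r) (w : ℝ) (hw : r - 1 < w) :
    w * Real.exp (w ^ 2 / 2) * ∫ t in Set.Ioi w, t ^ r * Real.exp (-t ^ 2 / 2)
      ≤ 2 * w ^ r := by
  have ha : 0 < r - 1 := by linarith
  have hw0 : 0 < w := lt_trans ha hw
  have key : (∫ t in Set.Ioi w, t ^ r * Real.exp (-t ^ 2 / 2))
      ≤ 2 * (w ^ (r-1) * Real.exp (-w ^ 2 / 2)) := by
    rcases lt_or_ge (w ^ 2) (r-1) with hC | hA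
    · exact key_hard hr hw hC
    · exact key_easy hr hw hA
  have h1 : w ^ (r-1) * w = w ^ r := by
    have h := Real.rpow_add_one hw0.ne' (r-1)
    rw [show r - 1 + 1 = r from by ring] at h
    exact h.symm
  have h2 : Real.exp (w ^ 2 / 2) * Real.exp (-w ^ 2 / 2) = 1 := by
    rw [← Real.exp_add, show w ^ 2 / 2 + -w ^ 2 / 2 = 0 from by ring, Real.exp_zero]
  calc w * Real.exp (w ^ 2 / 2) * ∫ t in Set.Ioi w, t ^ r * Real.exp (-t ^ 2 / 2)
      ≤ w * Real.exp (w ^ 2 / 2) * (2 * (w ^ (r-1) * Real.exp (-w ^ 2 / 2))) := by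
        apply mul_le_mul_of_nonneg_left key (by positivity)
    _ = 2 * w ^ r := by
        linear_combination 2 * w * w ^ (r-1) * h2 + 2 * h1
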